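/- arXiv:1601.03634 — 3 statements merged into one kernel-verified Lean document; each statement's English description precedes it below -/
import Mathlib

section
/- Let X be a free abelian group, X_0 ⊆ X a subgroup, P ⊆ X a submonoid, W a group acting on X fixing X_0 pointwise, and let φ, ψ: X → ℤ^l be functions such that (1) φ(λ) ∈ ℕ^l ⟺ λ ∈ P and likewise for ψ, (3) for all λ, λ' there exists w ∈ W with φ(w·λ + λ') = φ(λ) + φ(λ'), and similarly for ψ, and (4) φ|_{X_0} and ψ|_{X_0} are bijections onto ℤ^l. Then there is a permutation σ ∈ S_l of coordinates such that φ(λ)_i = ψ(λ)_{σ(i)} for all λ ∈ X and i. -/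
/-- A nonnegative, nonzero, indecomposable element of `ℕ^l` is a standard basis vector. -/
lemma stmt5_aux_single {l : ℕ} (u : Fin l → ℤ) (hu0 : ∀ k, 0 ≤ u k) (hne : u ≠ 0)
    (hind : ∀ a b : Fin l → ℤ, (∀ k, 0 ≤ a k) → (∀ k, 0 ≤ b k) → u = a + b →
      a = 0 ∨ b = 0) :
    ∃ j, u = Pi.single j 1 := by
  obtain ⟨j, hj⟩ : ∃ j, u j ≠ 0 := by
    by_contra h; push_neg at h; exact hne (funext h)
  have hj1 : 1 ≤ u j := by have := hu0 j; omega
  refine ⟨j, ?_⟩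
  have ha0 : ∀ k, (0:ℤ) ≤ (Pi.single j 1 : Fin l → ℤ) k := by
    intro k
    rcases eq_or_ne k j with rfl | hk
    · simp
    · simp [Pi.single_eq_of_ne hk]
  have hb0 : ∀ k, (0:ℤ) ≤ (u - Pi.single j 1 : Fin l → ℤ) k := by
    intro k
    rcases eq_or_ne k j with rfl | hk
    · simpa using hj1
    · simpa [Pi.single_eq_of_ne hk] using hu0 k
  rcases hind (Pi.single j 1) (u - Pi.single j 1) ha0 hb0 (by ring) with h | h
  · exfalso
    have := congrFun h j
    simp at this
  · have : u - Pi.single j 1 = 0 := h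
    have := sub_eq_zero.mp this
    exact this

/-- Uniqueness of the function `φ` of Assumption 3.4: two functions satisfying
conditions (1), (3) and (4) differ by a permutation of coordinates. -/
theorem stmt5 {X : Type*} [AddCommGroup X] [Module.Free ℤ X]
    {W : Type*} [Group W] [DistribMulAction W X]
    (X0 : AddSubgroup X) (P : AddSubmonoid X) (l : ℕ)
    (htriv : ∀ (w : W), ∀ x ∈ X0, w • x = x)
    (φ ψ : X → Fin l → ℤ)
    (hφ1 : ∀ x, (∀ i, 0 ≤ φ x i) ↔ x ∈ P)
    (hψ1 : ∀ x, (∀ i, 0 ≤ ψ x i) ↔ x ∈ P)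
    (hφ3 : ∀ x y : X, ∃ w : W, φ (w • x + y) = φ x + φ y)
    (hψ3 : ∀ x y : X, ∃ w : W, ψ (w • x + y) = ψ x + ψ y)
    (hφ4 : Function.Bijective fun x : X0 => φ x)
    (hψ4 : Function.Bijective fun x : X0 => ψ x) :
    ∃ σ : Equiv.Perm (Fin l), ∀ (x : X) (i : Fin l), φ x i = ψ x (σ i) := by
  -- additivity when the first argument lies in X0
  have hφadd : ∀ x ∈ X0, ∀ y : X, φ (x + y) = φ x + φ y := by
    intro x hx y
    obtain ⟨w, hw⟩ := hφ3 x y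
    rwa [htriv w x hx] at hw
  have hψadd : ∀ x ∈ X0, ∀ y : X, ψ (x + y) = ψ x + ψ y := by
    intro x hx y
    obtain ⟨w, hw⟩ := hψ3 x y
    rwa [htriv w x hx] at hw
  -- the additive isomorphisms X0 ≃+ ℤ^l
  let A : X0 ≃+ (Fin l → ℤ) :=
    AddEquiv.ofBijective (AddMonoidHom.mk' (fun x : X0 => φ x)
      (fun a b => by simpa using hφadd a a.2 b)) hφ4
  let B : X0 ≃+ (Fin l → ℤ) :=
    AddEquiv.ofBijective (AddMonoidHom.mk' (fun x : X0 => ψ x)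
      (fun a b => by simpa using hψadd a a.2 b)) hψ4
  have hA : ∀ x : X0, A x = φ x := fun x => rfl
  have hB : ∀ x : X0, B x = ψ x := fun x => rfl
  let θ : (Fin l → ℤ) ≃+ (Fin l → ℤ) := A.symm.trans B
  have hθ : ∀ x : X0, θ (φ x) = ψ x := by
    intro x
    show B (A.symm (A x)) = ψ x
    rw [A.symm_apply_apply]
    exact hB x
  -- θ preserves the positive orthant in both directions
  have hpos : ∀ v : Fin l → ℤ, (∀ k, 0 ≤ θ v k) ↔ (∀ k, 0 ≤ v k) := by
    intro v
    obtain ⟨x, rfl⟩ := A.surjective v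
    rw [hA x, hθ x]
    rw [hψ1, hφ1]
  -- θ maps basis vectors to basis vectors
  have hbasis : ∀ i : Fin l, ∃ j, θ (Pi.single i 1) = Pi.single j 1 := by
    intro i
    apply stmt5_aux_single
    · rw [hpos]
      intro k
      rcases eq_or_ne k i with rfl | hk
      · simp
      · simp [Pi.single_eq_of_ne hk]
    · intro h
      have : (Pi.single i 1 : Fin l → ℤ) = 0 := θ.injective (by simpa using h)
      have := congrFun this i
      simp at this
    · intro a b ha hb hab
      have ha' : ∀ k, 0 ≤ θ.symm a k := by
        rw [show (∀ k, 0 ≤ θ.symm a k) ↔ _ from (hpos (θ.symm a)).symm.trans (by rw [θ.apply_symm_apply])]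
        exact ha
      have hb' : ∀ k, 0 ≤ θ.symm b k := by
        rw [show (∀ k, 0 ≤ θ.symm b k) ↔ _ from (hpos (θ.symm b)).symm.trans (by rw [θ.apply_symm_apply])]
        exact hb
      have hsum : Pi.single i 1 = θ.symm a + θ.symm b := by
        apply θ.injective
        rw [map_add, θ.apply_symm_apply, θ.apply_symm_apply, hab]
      -- indecomposability of e_i in ℕ^l
      have key : θ.symm a = 0 ∨ θ.symm b = 0 := by
        have hi := congrFun hsum i
        simp only [Pi.single_eq_same, Pi.add_apply] at hi
        have hz : ∀ k, k ≠ i → θ.symm a k = 0 ∧ θ.symm b k = 0 := by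
          intro k hk
          have hk' := congrFun hsum k
          simp only [Pi.single_eq_of_ne hk, Pi.add_apply] at hk'
          have h1 := ha' k
          have h2 := hb' k
          constructor <;> omega
        rcases le_or_gt (θ.symm a i) 0 with h0 | h0
        · left
          funext k
          show θ.symm a k = 0
          rcases eq_or_ne k i with hki | hki
          · rw [hki]; exact le_antisymm h0 (ha' i)
          · exact (hz k hki).1
        · right
          funext k
          show θ.symm b k = 0
          rcases eq_or_ne k i with hki | hki
          · rw [hki]; have := hb' i; omega
          · exact (hz k hki).2
      rcases key with h | h
      · left
        have : a = θ (0 : Fin l → ℤ) := by rw [← h, θ.apply_symm_apply]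
        simpa using this
      · right
        have : b = θ (0 : Fin l → ℤ) := by rw [← h, θ.apply_symm_apply]
        simpa using this
  choose f hf using hbasis
  have hfinj : Function.Injective f := by
    intro i i' h
    have : θ (Pi.single i 1) = θ (Pi.single i' 1) := by rw [hf, hf, h]
    have h2 := θ.injective this
    have := congrFun h2 i
    rcases eq_or_ne i i' with h3 | h3
    · exact h3
    · exfalso
      rw [Pi.single_eq_same, Pi.single_eq_of_ne h3] at this
      exact one_ne_zero this
  let σ : Equiv.Perm (Fin l) := Equiv.ofBijective f (Finite.injective_iff_bijective.mp hfinj)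
  have hσ : ∀ i, σ i = f i := fun i => rfl
  -- θ v (σ i) = v i for all v
  have hθeval : ∀ (v : Fin l → ℤ) (i : Fin l), θ v (σ i) = v i := by
    intro v i
    have hv : v = ∑ j : Fin l, (v j) • (Pi.single j 1 : Fin l → ℤ) := by
      funext k
      rw [Finset.sum_apply]
      rw [Finset.sum_eq_single k]
      · simp
      · intro j _ hj
        simp [Pi.single_eq_of_ne (Ne.symm hj)]
      · intro h; exact absurd (Finset.mem_univ k) h
    have hθv : θ v = ∑ j : Fin l, (v j) • (Pi.single (f j) 1 : Fin l → ℤ) := by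
      conv_lhs => rw [hv]
      rw [map_sum]
      refine Finset.sum_congr rfl fun j _ => ?_
      rw [map_zsmul, hf j]
    rw [hθv, Finset.sum_apply, Finset.sum_eq_single i]
    · show v i • (Pi.single (f i) 1 : Fin l → ℤ) (f i) = v i
      rw [Pi.single_eq_same]
      simp
    · intro j _ hj
      have hne : σ i ≠ f j := by
        show f i ≠ f j
        exact fun h => hj (hfinj h).symm
      rw [Pi.smul_apply, Pi.single_eq_of_ne hne]
      simp
    · intro h; exact absurd (Finset.mem_univ i) h
  -- the key consequence on X0
  have hX0 : ∀ x : X0, ∀ i, ψ (x : X) (σ i) = φ (x : X) i := by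
    intro x i
    rw [← hθ x]
    exact hθeval (φ x) i
  refine ⟨σ, fun x i => ?_⟩
  -- Two inequalities via shifting by elements of X0.
  have le1 : φ x i ≤ ψ x (σ i) := by
    set c : Fin l → ℤ := fun j => if j = i then -φ x i else max (-φ x j) (-ψ x (σ j)) with hc
    obtain ⟨x0, hx0⟩ := A.surjective c
    have hφx0 : φ (x0 : X) = c := by rw [← hA]; exact hx0
    have hmem : (x0 : X) + x ∈ P := by
      rw [← hφ1]
      intro k
      rw [hφadd x0 x0.2 x, Pi.add_apply, hφx0]
      rcases eq_or_ne k i with rfl | hk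
      · simp [hc]
      · simp only [hc, if_neg hk]
        have := le_max_left (-φ x k) (-ψ x (σ k))
        omega
    have := (hψ1 ((x0 : X) + x)).mpr hmem (σ i)
    rw [hψadd x0 x0.2 x, Pi.add_apply, hX0 x0 i, hφx0] at this
    simp only [hc, if_pos rfl] at this
    omega
  have le2 : ψ x (σ i) ≤ φ x i := by
    set c : Fin l → ℤ := fun j => if j = i then -ψ x (σ i) else max (-φ x j) (-ψ x (σ j)) with hc
    obtain ⟨x0, hx0⟩ := A.surjective c
    have hφx0 : φ (x0 : X) = c := by rw [← hA]; exact hx0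
    have hmem : (x0 : X) + x ∈ P := by
      rw [← hψ1]
      intro k
      obtain ⟨j, rfl⟩ := σ.surjective k
      rw [hψadd x0 x0.2 x, Pi.add_apply, hX0 x0 j, hφx0]
      rcases eq_or_ne j i with rfl | hj
      · simp [hc]
      · simp only [hc, if_neg hj]
        have := le_max_right (-φ x j) (-ψ x (σ j))
        omega
    have := (hφ1 ((x0 : X) + x)).mpr hmem i
    rw [hφadd x0 x0.2 x, Pi.add_apply, hφx0] at this
    simp only [hc, if_pos rfl] at this
    omega
  omega
end

section
/- Define φ: ℤ^{2l} → ℤ by φ(λ) = Σ_{i=1}^l min(λ_i, λ_{i'}) with i' = 2l+1−i, and let K ⊆ ℤ^{2l} be generated by (e_i+e_{i'})−(e_j+e_{j'}). Then φ(λ) ≥ 0 if and only if λ ∈ ℕ^{2l} + K, i.e., λ differs from a vector with nonnegative coordinates by an element of K. -/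
/-- The index `i\x27 = 2l+1-i` (in 0-based terms, `2l-1-i`). -/
def idual {l : ℕ} (i : Fin (2 * l)) : Fin (2 * l) :=
  ⟨2 * l - 1 - i.val, by have := i.isLt; omega⟩

/-- The standard basis vector `e_i` of `ℤ^{2l}`. -/
def ee {l : ℕ} (i : Fin (2 * l)) : Fin (2 * l) → ℤ := Pi.single i 1

/-- The subgroup `K ⊆ ℤ^{2l}` generated by `(e_i + e_{i\x27}) − (e_j + e_{j\x27})`
for `i, j ≤ l`; the character lattice of the torus of `GSp_{2l}` is `ℤ^{2l}/K`. -/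
def Kgsp (l : ℕ) : AddSubgroup (Fin (2 * l) → ℤ) :=
  AddSubgroup.closure
    { v | ∃ i j : Fin (2 * l), i.val < l ∧ j.val < l ∧
        v = (ee i + ee (idual i)) - (ee j + ee (idual j)) }

/-- `φ(λ) = Σ_{i=1}^l min(λ_i, λ_{i'})`. -/
def phiGSp {l : ℕ} (lam : Fin (2 * l) → ℤ) : ℤ :=
  ∑ i ∈ Finset.univ.filter (fun i : Fin (2 * l) => i.val < l),
    min (lam i) (lam (idual i))

lemma idual_idual {l : ℕ} (i : Fin (2 * l)) : idual (idual i) = i := by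
  have := i.isLt
  simp only [idual]
  ext
  simp
  omega

lemma idual_eq_iff {l : ℕ} {a b : Fin (2 * l)} : idual a = b ↔ a = idual b := by
  constructor
  · rintro rfl; exact (idual_idual a).symm
  · rintro rfl; exact idual_idual b

/-- The subgroup of symmetric vectors with zero sum over the first half. -/
def Hsym (l : ℕ) : AddSubgroup (Fin (2 * l) → ℤ) where
  carrier := {v | (∀ a, v a = v (idual a)) ∧
    ∑ i ∈ Finset.univ.filter (fun i : Fin (2 * l) => i.val < l), v i = 0}
  add_mem' := by
    rintro v w ⟨hv1, hv2⟩ ⟨hw1, hw2⟩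
    refine ⟨fun a => by simp [hv1 a, hw1 a], ?_⟩
    simp [Finset.sum_add_distrib, hv2, hw2]
  zero_mem' := by simp
  neg_mem' := by
    rintro v ⟨hv1, hv2⟩
    exact ⟨fun a => by simp [hv1 a], by simp [Finset.sum_neg_distrib, hv2]⟩

lemma Kgsp_le_Hsym (l : ℕ) : Kgsp l ≤ Hsym l := by
  rw [Kgsp, AddSubgroup.closure_le]
  rintro v ⟨i, j, hi, hj, rfl⟩
  constructor
  · intro a
    simp only [Pi.sub_apply, Pi.add_apply, ee, Pi.single_apply, idual_eq_iff, idual_idual]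
    ring
  · have hmemi : i ∈ Finset.univ.filter (fun i : Fin (2 * l) => i.val < l) := by
      simp [hi]
    have hmemj : j ∈ Finset.univ.filter (fun i : Fin (2 * l) => i.val < l) := by
      simp [hj]
    have hni : idual i ∉ Finset.univ.filter (fun i : Fin (2 * l) => i.val < l) := by
      have := i.isLt
      simp [idual]; omega
    have hnj : idual j ∉ Finset.univ.filter (fun i : Fin (2 * l) => i.val < l) := by
      have := j.isLt
      simp [idual]; omega
    simp only [Pi.sub_apply, Pi.add_apply, ee, Pi.single_apply]
    rw [Finset.sum_sub_distrib, Finset.sum_add_distrib, Finset.sum_add_distrib]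
    rw [Finset.sum_ite_eq' _ i (fun _ => (1:ℤ)), Finset.sum_ite_eq' _ (idual i) (fun _ => (1:ℤ)),
        Finset.sum_ite_eq' _ j (fun _ => (1:ℤ)), Finset.sum_ite_eq' _ (idual j) (fun _ => (1:ℤ))]
    simp [hmemi, hmemj, hni, hnj]

/-- `φ(λ) ≥ 0` iff `λ ∈ ℕ^{2l} + K`. -/
theorem stmt14 (l : ℕ) (lam : Fin (2 * l) → ℤ) :
    0 ≤ phiGSp lam ↔
      ∃ ν κ : Fin (2 * l) → ℤ, (∀ a, 0 ≤ ν a) ∧ κ ∈ Kgsp l ∧ lam = ν + κ := by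
  constructor
  · intro hphi
    rcases Nat.eq_zero_or_pos l with hl | hl
    · subst hl
      refine ⟨lam, 0, fun a => absurd a.isLt (by omega), (Kgsp 0).zero_mem, by simp⟩
    · set S := Finset.univ.filter (fun i : Fin (2 * l) => i.val < l) with hS
      have h2l : 0 < 2 * l := by omega
      set i0 : Fin (2 * l) := ⟨0, h2l⟩ with hi0
      have hi0l : i0.val < l := hl
      set m : Fin (2 * l) → ℤ := fun i => min (lam i) (lam (idual i)) with hm
      set κ : Fin (2 * l) → ℤ :=
        ∑ i ∈ S, m i • ((ee i + ee (idual i)) - (ee i0 + ee (idual i0))) with hκ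
      have hκmem : κ ∈ Kgsp l := by
        apply AddSubgroup.sum_mem
        intro i hiS
        apply AddSubgroup.zsmul_mem
        apply AddSubgroup.subset_closure
        exact ⟨i, i0, by simpa [hS] using hiS, hi0l, rfl⟩
      have hsum : ∑ i ∈ S, m i = phiGSp lam := rfl
      have hκa : ∀ a : Fin (2 * l), κ a =
          (if a ∈ S then m a else 0) + (if idual a ∈ S then m (idual a) else 0)
          - phiGSp lam * ((if a = i0 then 1 else 0) + (if a = idual i0 then 1 else 0)) := by
        intro a
        rw [hκ, Finset.sum_apply]
        simp only [Pi.smul_apply, Pi.sub_apply, Pi.add_apply, ee, Pi.single_apply,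
          smul_eq_mul]
        have : ∀ i ∈ S, m i * ((if a = i then (1:ℤ) else 0) + (if a = idual i then 1 else 0)
            - ((if a = i0 then 1 else 0) + (if a = idual i0 then 1 else 0)))
            = ((if a = i then m i else 0) + (if idual a = i then m i else 0))
            - m i * ((if a = i0 then 1 else 0) + (if a = idual i0 then 1 else 0)) := by
          intro i hi
          have hil : i.val < l := by simpa [hS] using hi
          have hne : i ≠ idual i := by
            intro h
            have := congrArg Fin.val h
            simp only [idual] at this
            omega
          simp only [idual_eq_iff]
          by_cases h1 : a = i <;> by_cases h2 : a = idual i <;>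
            simp [h1, h2, hne, hne.symm] <;> ring
        rw [Finset.sum_congr rfl this, Finset.sum_sub_distrib, Finset.sum_add_distrib,
          Finset.sum_ite_eq S a m, Finset.sum_ite_eq S (idual a) m,
          ← Finset.sum_mul, hsum]
      refine ⟨lam - κ, κ, ?_, hκmem, by ring⟩
      intro a
      rw [Pi.sub_apply, hκa a]
      have haS : (a ∈ S) ↔ a.val < l := by simp [hS]
      have hdaS : (idual a ∈ S) ↔ ¬ (a.val < l) := by
        have := a.isLt
        simp [hS, idual]
        omega
      have hma : m a ≤ lam a := min_le_left _ _
      have hmda : m (idual a) ≤ lam a := by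
        have : m (idual a) ≤ lam (idual (idual a)) := min_le_right _ _
        rwa [idual_idual] at this
      by_cases h : a.val < l
      · have h1 : a ∈ S := haS.mpr h
        have h2 : idual a ∉ S := fun hc => (hdaS.mp hc) h
        simp only [if_pos h1, if_neg h2, add_zero]
        have hnn : (0:ℤ) ≤ (if a = i0 then 1 else 0) + (if a = idual i0 then 1 else 0) := by
          positivity
        nlinarith [mul_nonneg hphi hnn]
      · have h1 : a ∉ S := fun hc => h (haS.mp hc)
        have h2 : idual a ∈ S := hdaS.mpr h
        simp only [if_neg h1, if_pos h2, zero_add]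
        have hnn : (0:ℤ) ≤ (if a = i0 then 1 else 0) + (if a = idual i0 then 1 else 0) := by
          positivity
        nlinarith [mul_nonneg hphi hnn]
  · rintro ⟨ν, κ, hν, hκ, rfl⟩
    obtain ⟨hsymm, hzero⟩ := Kgsp_le_Hsym l hκ
    have : phiGSp (ν + κ) = phiGSp ν
        + ∑ i ∈ Finset.univ.filter (fun i : Fin (2 * l) => i.val < l), κ i := by
      unfold phiGSp
      rw [← Finset.sum_add_distrib]
      apply Finset.sum_congr rfl
      intro i hi
      rw [Pi.add_apply, Pi.add_apply, ← hsymm i, min_add_add_right]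
    rw [this, hzero, add_zero]
    unfold phiGSp
    exact Finset.sum_nonneg fun i _ => le_min (hν i) (hν (idual i))
end

section
/- Let n = n_1 + … + n_l, M_i = {n_1+…+n_{i-1}+1, …, n_1+…+n_i}, and d_i = Σ_{j∈M_i} e_j ∈ ℤ^n. Define φ: ℤ^n → ℤ^l by φ(λ)_i = min_{a∈M_i} λ_a. Then φ satisfies all four conditions of Assumption 3.4 for the group W = S_{M_1} × … × S_{M_l} acting on ℤ^n by permuting coordinates, with P = ℕ^n and X_0 = the span of d_1,…,d_l: (1) φ(λ) ∈ ℕ^l ⟺ λ ∈ ℕ^n; (2) φ(mλ) = mφ(λ) for m ∈ ℕ; (3) for all λ, λ' there is w ∈ W with φ(w·λ+λ') = φ(λ)+φ(λ'); (4) φ restricted to span{d_1,…,d_l} is a bijection onto ℤ^l. -/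
/-- The Levi case `GL_{n₁} × ⋯ × GL_{n_l} ⊆ GL_n`: the function
`φ(λ)ᵢ = min_{a ∈ Mᵢ} λ_a` satisfies all four conditions of Assumption 3.4,
with `W = S_{M₁} × ⋯ × S_{M_l}`, `P = ℕ^n` and `X₀ = span{d₁,…,d_l}`. -/
theorem stmt15 (l n : ℕ) (nn : Fin l → ℕ) (hpos : ∀ i, 0 < nn i)
    (hn : n = ∑ i, nn i)
    (M : Fin l → Finset (Fin n))
    (hM : ∀ (i : Fin l) (a : Fin n), a ∈ M i ↔
      (∑ j ∈ Finset.univ.filter (fun j => j < i), nn j) ≤ a.val ∧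
        a.val < (∑ j ∈ Finset.univ.filter (fun j => j < i), nn j) + nn i)
    (d : Fin l → (Fin n → ℤ)) (hd : ∀ i a, d i a = if a ∈ M i then 1 else 0)
    (φ : (Fin n → ℤ) → Fin l → ℤ)
    (hφ : ∀ (lam : Fin n → ℤ) (i : Fin l),
      (∃ a ∈ M i, φ lam i = lam a) ∧ ∀ a ∈ M i, φ lam i ≤ lam a) :
    (∀ lam, (∀ i, 0 ≤ φ lam i) ↔ ∀ a, 0 ≤ lam a) ∧
    (∀ (m : ℕ) (lam), φ (m • lam) = m • φ lam) ∧
    (∀ lam lam', ∃ w : Equiv.Perm (Fin n), (∀ i, ∀ a ∈ M i, w a ∈ M i) ∧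
      φ (fun a => lam (w⁻¹ a) + lam' a) = φ lam + φ lam') ∧
    Function.Bijective
      (fun x : AddSubgroup.closure (Set.range d) => φ (x : Fin n → ℤ)) := by
  -- abbreviation for partial sums
  set S : Fin l → ℕ := fun i => ∑ j ∈ Finset.univ.filter (fun j => j < i), nn j with hS
  -- every coordinate lies in some block
  have hcover : ∀ a : Fin n, ∃ i, a ∈ M i := by
    intro a
    have hn0 : 0 < n := a.pos
    have hl0 : 0 < l := by
      rcases Nat.eq_zero_or_pos l with h | h
      · subst h
        simp at hn
        omega
      · exact h
    have hz : (⟨0, hl0⟩ : Fin l) ∈ Finset.univ.filter (fun i => S i ≤ a.val) := by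
      have : Finset.univ.filter (fun j => j < (⟨0, hl0⟩ : Fin l)) = ∅ := by
        apply Finset.filter_false_of_mem
        intro j _
        simp [Fin.lt_def]
      simp [S, this]
    set A : Finset (Fin l) := Finset.univ.filter (fun i => S i ≤ a.val) with hA
    have hAne : A.Nonempty := ⟨_, hz⟩
    set i := A.max' hAne with hi
    have hiA : i ∈ A := A.max'_mem hAne
    have hile : S i ≤ a.val := by
      have := Finset.mem_filter.mp hiA
      exact this.2
    have hlt : a.val < S i + nn i := by
      by_contra hcon
      push_neg at hcon
      by_cases hsucc : i.val + 1 < l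
      · set i' : Fin l := ⟨i.val + 1, hsucc⟩ with hi'
        have hfilter : Finset.univ.filter (fun j => j < i')
            = insert i (Finset.univ.filter (fun j => j < i)) := by
          ext j
          simp only [Finset.mem_filter, Finset.mem_univ, true_and, Finset.mem_insert,
            Fin.lt_def, Fin.ext_iff, hi']
          omega
        have hnotmem : i ∉ Finset.univ.filter (fun j => j < i) := by
          simp
        have hSi' : S i' = nn i + S i := by
          simp only [hS]
          rw [hfilter, Finset.sum_insert hnotmem]
        have hi'A : i' ∈ A := by
          simp only [hA, Finset.mem_filter, Finset.mem_univ, true_and]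
          omega
        have h1 := Finset.le_max' A i' hi'A
        rw [← hi] at h1
        have h2 : i < i' := by
          simp [Fin.lt_def, hi']
        exact absurd h1 (not_le.mpr h2)
      · have hl_eq : i.val + 1 = l := by
          have := i.isLt
          omega
        have huniv : (Finset.univ : Finset (Fin l))
            = insert i (Finset.univ.filter (fun j => j < i)) := by
          ext j
          simp only [Finset.mem_univ, Finset.mem_insert, Finset.mem_filter, true_and,
            Fin.lt_def, Fin.ext_iff, true_iff]
          have := j.isLt
          omega
        have hnotmem : i ∉ Finset.univ.filter (fun j => j < i) := by simp
        have : n = nn i + S i := by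
          rw [hn, huniv, Finset.sum_insert hnotmem]
        have := a.isLt
        omega
    exact ⟨i, (hM i a).mpr ⟨hile, hlt⟩⟩
  -- blocks are disjoint
  have huniq : ∀ (i j : Fin l) (x : Fin n), x ∈ M i → x ∈ M j → i = j := by
    have key : ∀ (i j : Fin l) (x : Fin n), i < j → x ∈ M i → x ∈ M j → False := by
      intro i j x hij hxi hxj
      have h1 := (hM i x).mp hxi
      have h2 := (hM j x).mp hxj
      have hnotmem : i ∉ Finset.univ.filter (fun k => k < i) := by simp
      have hsub : insert i (Finset.univ.filter (fun k => k < i))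
          ⊆ Finset.univ.filter (fun k => k < j) := by
        intro k hk
        simp only [Finset.mem_insert, Finset.mem_filter, Finset.mem_univ, true_and] at hk ⊢
        rcases hk with rfl | hk
        · exact hij
        · exact lt_trans hk hij
      have hle : nn i + S i ≤ S j := by
        have := Finset.sum_le_sum_of_subset hsub (f := nn)
        rwa [Finset.sum_insert hnotmem] at this
      simp only [hS] at hle
      omega
    intro i j x hxi hxj
    rcases lt_trichotomy i j with h | h | h
    · exact absurd (key i j x h hxi hxj) (not_false)
    · exact h
    · exact absurd (key j i x h hxj hxi) (not_false)
  choose idx hidx using hcover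
  have hidx_eq : ∀ (x : Fin n) (i : Fin l), x ∈ M i → idx x = i :=
    fun x i h => huniq _ _ x (hidx x) h
  refine ⟨?_, ?_, ?_, ?_⟩
  · -- (1)
    intro lam
    constructor
    · intro h a
      exact le_trans (h (idx a)) ((hφ lam (idx a)).2 a (hidx a))
    · intro h i
      obtain ⟨a, ha, he⟩ := (hφ lam i).1
      rw [he]
      exact h a
  · -- (2)
    intro m lam
    funext i
    obtain ⟨a, ha, hea⟩ := (hφ (m • lam) i).1
    obtain ⟨b, hb, heb⟩ := (hφ lam i).1
    have hsm : ∀ c : Fin n, (m • lam) c = (m : ℤ) * lam c := by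
      intro c
      simp [nsmul_eq_mul]
    have h1 : φ (m • lam) i ≤ (m : ℤ) * φ lam i := by
      have := (hφ (m • lam) i).2 b hb
      rw [hsm b, ← heb] at this
      exact this
    have h2 : (m : ℤ) * φ lam i ≤ φ (m • lam) i := by
      have hle : φ lam i ≤ lam a := (hφ lam i).2 a ha
      have := mul_le_mul_of_nonneg_left hle (by positivity : (0:ℤ) ≤ (m:ℤ))
      rw [← hsm a, ← hea] at this
      exact this
    have : φ (m • lam) i = (m : ℤ) * φ lam i := le_antisymm h1 h2
    simpa [nsmul_eq_mul] using this
  · -- (3)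
    intro lam lam'
    choose aa haa hva using fun i => (hφ lam i).1
    choose bb hbb hvb using fun i => (hφ lam' i).1
    have hswap_mem : ∀ (i : Fin l) (u v x : Fin n), u ∈ M i → v ∈ M i → x ∈ M i →
        Equiv.swap u v x ∈ M i := by
      intro i u v x hu hv hx
      rcases eq_or_ne x u with rfl | h1
      · rw [Equiv.swap_apply_left]; exact hv
      rcases eq_or_ne x v with rfl | h2
      · rw [Equiv.swap_apply_right]; exact hu
      · rw [Equiv.swap_apply_of_ne_of_ne h1 h2]; exact hx
    set f : Fin n → Fin n := fun x => Equiv.swap (aa (idx x)) (bb (idx x)) x with hf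
    have hfmem : ∀ x, f x ∈ M (idx x) :=
      fun x => hswap_mem _ _ _ _ (haa _) (hbb _) (hidx x)
    have hfmem' : ∀ (x : Fin n) (i : Fin l), x ∈ M i → f x ∈ M i := by
      intro x i hx
      have := hfmem x
      rwa [hidx_eq x i hx] at this
    have hfinv : Function.Involutive f := by
      intro x
      have h1 : idx (f x) = idx x := hidx_eq _ _ (hfmem x)
      show Equiv.swap (aa (idx (f x))) (bb (idx (f x))) (f x) = x
      rw [h1]
      exact Equiv.swap_apply_self _ _ x
    set w : Equiv.Perm (Fin n) := hfinv.toPerm f with hwdef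
    have hw : ∀ x, w x = f x := fun _ => rfl
    have hwinv : ∀ x, w⁻¹ x = f x := by
      intro x
      have : w (f x) = x := hfinv x
      calc w⁻¹ x = w⁻¹ (w (f x)) := by rw [this]
        _ = f x := by simp
    refine ⟨w, ?_, ?_⟩
    · intro i x hx
      rw [hw]
      exact hfmem' x i hx
    · funext i
      set g : Fin n → ℤ := fun c => lam (w⁻¹ c) + lam' c with hg
      show φ g i = (φ lam + φ lam') i
      have hw_b : w⁻¹ (bb i) = aa i := by
        rw [hwinv]
        show Equiv.swap (aa (idx (bb i))) (bb (idx (bb i))) (bb i) = aa i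
        rw [hidx_eq (bb i) i (hbb i), Equiv.swap_apply_right]
      obtain ⟨c, hc, hval⟩ := (hφ g i).1
      have h1 : φ g i ≤ φ lam i + φ lam' i := by
        have := (hφ g i).2 (bb i) (hbb i)
        rw [hg] at this
        simp only [hw_b] at this
        rw [hva i, hvb i]
        exact this
      have h2 : φ lam i + φ lam' i ≤ φ g i := by
        rw [hval]
        have hcmem : w⁻¹ c ∈ M i := by
          rw [hwinv]
          exact hfmem' c i hc
        exact add_le_add ((hφ lam i).2 _ hcmem) ((hφ lam' i).2 c hc)
      rw [Pi.add_apply]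
      exact le_antisymm h1 h2
  · -- (4)
    have hcon : ∀ x ∈ AddSubgroup.closure (Set.range d),
        ∀ (i : Fin l), ∀ p ∈ M i, ∀ q ∈ M i, x p = x q := by
      intro x hx
      induction hx using AddSubgroup.closure_induction with
      | mem y hy =>
        obtain ⟨j, rfl⟩ := hy
        intro i p hp q hq
        rw [hd j p, hd j q]
        have hiff : (p ∈ M j) ↔ (q ∈ M j) := by
          constructor
          · intro h
            rw [← huniq i j p hp h]
            exact hq
          · intro h
            rw [← huniq i j q hq h]
            exact hp
        by_cases h : p ∈ M j
        · rw [if_pos h, if_pos (hiff.mp h)]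
        · rw [if_neg h, if_neg (fun h' => h (hiff.mpr h'))]
      | zero => intro i p hp q hq; rfl
      | add y z hy hz ihy ihz =>
        intro i p hp q hq
        have := ihy i p hp q hq
        have := ihz i p hp q hq
        simp only [Pi.add_apply]
        omega
      | neg y hy ihy =>
        intro i p hp q hq
        have := ihy i p hp q hq
        simp only [Pi.neg_apply]
        omega
    have hφcon : ∀ x ∈ AddSubgroup.closure (Set.range d), ∀ (i : Fin l), ∀ p ∈ M i,
        φ x i = x p := by
      intro x hx i p hp
      obtain ⟨c, hc, hval⟩ := (hφ x i).1
      rw [hval]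
      exact hcon x hx i c hc p hp
    constructor
    · rintro ⟨x, hx⟩ ⟨y, hy⟩ h
      simp only at h
      ext p
      have h1 := congrFun h (idx p)
      rw [hφcon x hx (idx p) p (hidx p), hφcon y hy (idx p) p (hidx p)] at h1
      exact h1
    · intro c
      set x : Fin n → ℤ := ∑ i, c i • d i with hx
      have hxmem : x ∈ AddSubgroup.closure (Set.range d) := by
        apply AddSubgroup.sum_mem
        intro i _
        exact AddSubgroup.zsmul_mem _ (AddSubgroup.subset_closure (Set.mem_range_self i)) (c i)
      have hxval : ∀ (i : Fin l), ∀ p ∈ M i, x p = c i := by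
        intro i p hp
        rw [hx]
        rw [Finset.sum_apply]
        rw [Finset.sum_eq_single i]
        · simp [hd, hp]
        · intro j _ hji
          have hpj : p ∉ M j := fun h => hji (huniq j i p h hp)
          simp [hd, hpj]
        · intro h
          exact absurd (Finset.mem_univ i) h
      refine ⟨⟨x, hxmem⟩, ?_⟩
      funext i
      obtain ⟨p, hp, _⟩ := (hφ x i).1
      show φ x i = c i
      rw [hφcon x hxmem i p hp, hxval i p hp]
end
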